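/- arXiv:1602.04010 — 3 statements merged into one kernel-verified Lean document; each statement's English description precedes it below -/
import Mathlib

section
/- The function T(y) = T_c - (T_c²/(2 T_a))·ln(cosh(b y)) with b² = 2 σ⁵ T_a/(k K_c⁴ T_c²) satisfies k T''(y) + (σ⁵/K_c⁴)·exp(-4 T_a (T_c - T(y))/T_c²) = 0 for all y, together with T'(0) = 0 and T(0) = T_c. -/
theorem stmt8 (k σ Kc Ta Tc : ℝ) (hk : 0 < k) (hσ : 0 < σ) (hKc : 0 < Kc)
    (hTa : 0 < Ta) (hTc : 0 < Tc) (b : ℝ)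
    (hb : b = Real.sqrt (2 * σ ^ 5 * Ta / (k * Kc ^ 4 * Tc ^ 2)))
    (T : ℝ → ℝ)
    (hT : ∀ y, T y = Tc - Tc ^ 2 / (2 * Ta) * Real.log (Real.cosh (b * y))) :
    (∀ y, k * deriv (deriv T) y +
      σ ^ 5 / Kc ^ 4 * Real.exp (-4 * Ta * (Tc - T y) / Tc ^ 2) = 0) ∧
    deriv T 0 = 0 ∧ T 0 = Tc := by
  have hcosh : ∀ x : ℝ, (0:ℝ) < Real.cosh x := fun x => Real.cosh_pos x
  set C : ℝ := Tc ^ 2 / (2 * Ta) with hC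
  have hTfun : T = fun y => Tc - C * Real.log (Real.cosh (b * y)) := funext hT
  have hb2 : b ^ 2 = 2 * σ ^ 5 * Ta / (k * Kc ^ 4 * Tc ^ 2) := by
    rw [hb, sq, Real.mul_self_sqrt]
    positivity
  have hlin : ∀ y : ℝ, HasDerivAt (fun y : ℝ => b * y) b y := by
    intro y
    simpa using (hasDerivAt_id y).const_mul b
  have hd1 : ∀ y, HasDerivAt T
      (-(C * b) * (Real.sinh (b * y) / Real.cosh (b * y))) y := by
    intro y
    rw [hTfun]
    have h2 : HasDerivAt (fun y : ℝ => Real.cosh (b * y)) (Real.sinh (b * y) * b) y :=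
      (Real.hasDerivAt_cosh (b * y)).comp y (hlin y)
    have h3 := (h2.log (ne_of_gt (hcosh _))).const_mul C
    have h4 := (hasDerivAt_const y Tc).sub h3
    refine h4.congr_deriv ?_
    ring
  have hD1 : deriv T = fun y => -(C * b) * (Real.sinh (b * y) / Real.cosh (b * y)) :=
    funext fun y => (hd1 y).deriv
  have hd2 : ∀ y, HasDerivAt (deriv T) (-(C * b ^ 2) / Real.cosh (b * y) ^ 2) y := by
    intro y
    rw [hD1]
    have hs : HasDerivAt (fun y : ℝ => Real.sinh (b * y)) (Real.cosh (b * y) * b) y :=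
      (Real.hasDerivAt_sinh (b * y)).comp y (hlin y)
    have hc : HasDerivAt (fun y : ℝ => Real.cosh (b * y)) (Real.sinh (b * y) * b) y :=
      (Real.hasDerivAt_cosh (b * y)).comp y (hlin y)
    have h5 := ((hs.div hc (ne_of_gt (hcosh _)))).const_mul (-(C * b))
    refine h5.congr_deriv ?_
    have hid : Real.cosh (b * y) ^ 2 - Real.sinh (b * y) ^ 2 = 1 :=
      Real.cosh_sq_sub_sinh_sq (b * y)
    have h6 : Real.cosh (b * y) * b * Real.cosh (b * y) -
        Real.sinh (b * y) * (Real.sinh (b * y) * b) = b := by linear_combination b * hid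
    rw [h6]
    ring
  refine ⟨fun y => ?_, ?_, ?_⟩
  · have hD2 : deriv (deriv T) y = -(C * b ^ 2) / Real.cosh (b * y) ^ 2 := (hd2 y).deriv
    have hexp : Real.exp (-4 * Ta * (Tc - T y) / Tc ^ 2) = 1 / Real.cosh (b * y) ^ 2 := by
      have harg : -4 * Ta * (Tc - T y) / Tc ^ 2 =
          -(Real.log (Real.cosh (b * y)) + Real.log (Real.cosh (b * y))) := by
        rw [hT y, hC]
        field_simp
        ring
      rw [harg, Real.exp_neg, Real.exp_add, Real.exp_log (hcosh _)]
      rw [one_div, sq]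
    rw [hD2, hexp]
    have hkey : k * (C * b ^ 2) = σ ^ 5 / Kc ^ 4 := by
      rw [hC, hb2]
      field_simp
    have hcne : Real.cosh (b * y) ^ 2 ≠ 0 := by positivity
    rw [← hkey]
    field_simp
    ring
  · rw [hD1]
    simp
  · rw [hT 0]
    simp
end

section
/- Given the scaling relations kδ/h² = T_m⁴ S⁵/(κ_m⁴ δ⁴), δ/h = G_E, G_E = S U_e/k, V_E = P T_m⁴ S³ h³/(L² κ_m⁴ δ⁴), and G_E = V_E ρ c_p (T_m - T_e)/k, with all quantities positive, it follows that V_E = (k T_m/κ_m)^{4/3} (P^{1/2}/L) (ρ c_p (T_m - T_e))^{-1/2} U_e^{-2/3}. -/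
theorem stmt15 (k δ h Tm S κm GE Ue VE P L ρ cp Te : ℝ)
    (hk : 0 < k) (hδ : 0 < δ) (hh : 0 < h) (hTm : 0 < Tm) (hS : 0 < S)
    (hκm : 0 < κm) (hGE : 0 < GE) (hUe : 0 < Ue) (hVE : 0 < VE) (hP : 0 < P)
    (hL : 0 < L) (hρ : 0 < ρ) (hcp : 0 < cp) (hTe : Te < Tm)
    (e1 : k * δ / h ^ 2 = Tm ^ 4 * S ^ 5 / (κm ^ 4 * δ ^ 4))
    (e2 : δ / h = GE) (e3 : GE = S * Ue / k)
    (e4 : VE = P * Tm ^ 4 * S ^ 3 * h ^ 3 / (L ^ 2 * κm ^ 4 * δ ^ 4))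
    (e5 : GE = VE * ρ * cp * (Tm - Te) / k) :
    VE = (k * Tm / κm) ^ ((4:ℝ)/3) * (P ^ ((1:ℝ)/2) / L) *
      (ρ * cp * (Tm - Te)) ^ (-(1:ℝ)/2) * Ue ^ (-(2:ℝ)/3) := by
  have hTmTe : 0 < Tm - Te := by linarith
  have hA : 0 < ρ * cp * (Tm - Te) := by positivity
  set A := ρ * cp * (Tm - Te) with hAdef
  -- clear denominators
  have q2 : δ = GE * h := by field_simp at e2; linarith
  have q1 : k * (GE * h) * (κm ^ 4 * (GE * h) ^ 4) = Tm ^ 4 * S ^ 5 * h ^ 2 := by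
    rw [q2] at e1; field_simp at e1; linear_combination h ^ 2 * e1
  have q4 : VE * (L ^ 2 * κm ^ 4 * (GE * h) ^ 4) = P * Tm ^ 4 * S ^ 3 * h ^ 3 := by
    rw [q2] at e4
    rw [eq_div_iff (by positivity)] at e4
    linarith [e4]
  have r4 : GE * k = S * Ue := by
    rw [eq_div_iff hk.ne'] at e3; linarith
  have r3 : S * Ue = VE * A := by
    rw [eq_div_iff hk.ne'] at e5
    nlinarith [e5, r4]
  -- cancel h^2 in q1
  have r1 : k * GE ^ 5 * κm ^ 4 * h ^ 3 = Tm ^ 4 * S ^ 5 := by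
    have := mul_right_cancel₀ (pow_ne_zero 2 hh.ne')
      (show (k * GE ^ 5 * κm ^ 4 * h ^ 3) * h ^ 2 = (Tm ^ 4 * S ^ 5) * h ^ 2 by
        linear_combination q1)
    exact this
  have r2 : VE * L ^ 2 * κm ^ 4 * GE ^ 4 * h = P * Tm ^ 4 * S ^ 3 := by
    exact mul_right_cancel₀ (pow_ne_zero 3 hh.ne')
      (show (VE * L ^ 2 * κm ^ 4 * GE ^ 4 * h) * h ^ 3 = (P * Tm ^ 4 * S ^ 3) * h ^ 3 by
        linear_combination q4)
  -- eliminate h: c3 : VE^3 L^6 κm^8 GE^7 = P^3 Tm^8 S^4 k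
  have c3 : VE ^ 3 * L ^ 6 * κm ^ 8 * GE ^ 7 = P ^ 3 * Tm ^ 8 * S ^ 4 * k := by
    apply mul_right_cancel₀ (show Tm ^ 4 * S ^ 5 ≠ 0 by positivity)
    calc VE ^ 3 * L ^ 6 * κm ^ 8 * GE ^ 7 * (Tm ^ 4 * S ^ 5)
        = VE ^ 3 * L ^ 6 * κm ^ 8 * GE ^ 7 * (k * GE ^ 5 * κm ^ 4 * h ^ 3) := by rw [r1]
      _ = k * ((VE * L ^ 2 * κm ^ 4 * GE ^ 4 * h) * (VE * L ^ 2 * κm ^ 4 * GE ^ 4 * h) * (VE * L ^ 2 * κm ^ 4 * GE ^ 4 * h)) := by ring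
      _ = k * ((P * Tm ^ 4 * S ^ 3) * (P * Tm ^ 4 * S ^ 3) * (P * Tm ^ 4 * S ^ 3)) := by rw [r2]
      _ = P ^ 3 * Tm ^ 8 * S ^ 4 * k * (Tm ^ 4 * S ^ 5) := by ring
  -- eliminate GE
  have c4 : VE ^ 3 * L ^ 6 * κm ^ 8 * S ^ 3 * Ue ^ 7 = P ^ 3 * Tm ^ 8 * k ^ 8 := by
    apply mul_right_cancel₀ (show S ^ 4 ≠ 0 by positivity)
    calc VE ^ 3 * L ^ 6 * κm ^ 8 * S ^ 3 * Ue ^ 7 * S ^ 4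
        = VE ^ 3 * L ^ 6 * κm ^ 8 * ((S * Ue) * (S * Ue) * (S * Ue) * (S * Ue) * (S * Ue) * (S * Ue) * (S * Ue)) := by ring
      _ = VE ^ 3 * L ^ 6 * κm ^ 8 * ((GE * k) * (GE * k) * (GE * k) * (GE * k) * (GE * k) * (GE * k) * (GE * k)) := by rw [r4]
      _ = (VE ^ 3 * L ^ 6 * κm ^ 8 * GE ^ 7) * k ^ 7 := by ring
      _ = (P ^ 3 * Tm ^ 8 * S ^ 4 * k) * k ^ 7 := by rw [c3]
      _ = P ^ 3 * Tm ^ 8 * k ^ 8 * S ^ 4 := by ring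
  -- eliminate S
  have key : VE ^ 6 * L ^ 6 * κm ^ 8 * A ^ 3 * Ue ^ 4 = P ^ 3 * Tm ^ 8 * k ^ 8 := by
    calc VE ^ 6 * L ^ 6 * κm ^ 8 * A ^ 3 * Ue ^ 4
        = VE ^ 3 * L ^ 6 * κm ^ 8 * ((VE * A) * (VE * A) * (VE * A)) * Ue ^ 4 := by ring
      _ = VE ^ 3 * L ^ 6 * κm ^ 8 * ((S * Ue) * (S * Ue) * (S * Ue)) * Ue ^ 4 := by rw [r3]
      _ = VE ^ 3 * L ^ 6 * κm ^ 8 * S ^ 3 * Ue ^ 7 := by ring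
      _ = P ^ 3 * Tm ^ 8 * k ^ 8 := c4
  -- now compare sixth powers
  set R := (k * Tm / κm) ^ ((4:ℝ)/3) * (P ^ ((1:ℝ)/2) / L) * A ^ (-(1:ℝ)/2) * Ue ^ (-(2:ℝ)/3) with hR
  have hkTm : 0 < k * Tm / κm := by positivity
  have hRpos : 0 < R := by rw [hR]; positivity
  have f1 : ((k * Tm / κm) ^ ((4:ℝ)/3)) ^ (6:ℕ) = (k * Tm / κm) ^ (8:ℕ) := by
    rw [← Real.rpow_natCast ((k * Tm / κm) ^ ((4:ℝ)/3)) 6, ← Real.rpow_mul hkTm.le,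
        ← Real.rpow_natCast (k * Tm / κm) 8]
    norm_num
  have f2 : (P ^ ((1:ℝ)/2)) ^ (6:ℕ) = P ^ (3:ℕ) := by
    rw [← Real.rpow_natCast (P ^ ((1:ℝ)/2)) 6, ← Real.rpow_mul hP.le,
        ← Real.rpow_natCast P 3]
    norm_num
  have f3 : (A ^ (-(1:ℝ)/2)) ^ (6:ℕ) = (A ^ (3:ℕ))⁻¹ := by
    rw [← Real.rpow_natCast (A ^ (-(1:ℝ)/2)) 6, ← Real.rpow_mul hA.le,
        show (-(1:ℝ)/2) * (6:ℕ) = -(3:ℝ) by norm_num, Real.rpow_neg hA.le,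
        show (3:ℝ) = ((3:ℕ):ℝ) by norm_num, Real.rpow_natCast]
  have f4 : (Ue ^ (-(2:ℝ)/3)) ^ (6:ℕ) = (Ue ^ (4:ℕ))⁻¹ := by
    rw [← Real.rpow_natCast (Ue ^ (-(2:ℝ)/3)) 6, ← Real.rpow_mul hUe.le,
        show (-(2:ℝ)/3) * (6:ℕ) = -(4:ℝ) by norm_num, Real.rpow_neg hUe.le,
        show (4:ℝ) = ((4:ℕ):ℝ) by norm_num, Real.rpow_natCast]
  have hR6 : R ^ (6:ℕ) = (k * Tm / κm) ^ (8:ℕ) * (P ^ (3:ℕ) / L ^ 6) * (A ^ (3:ℕ))⁻¹ * (Ue ^ (4:ℕ))⁻¹ := by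
    rw [hR, mul_pow, mul_pow, mul_pow, div_pow, f1, f2, f3, f4]
  have hVE6 : VE ^ (6:ℕ) = R ^ (6:ℕ) := by
    have hv : VE ^ (6:ℕ) = (P ^ 3 * Tm ^ 8 * k ^ 8) / (L ^ 6 * κm ^ 8 * A ^ 3 * Ue ^ 4) := by
      rw [eq_div_iff (by positivity)]
      linear_combination key
    rw [hv, hR6]
    field_simp
  exact (pow_left_inj₀ hVE.le hRpos.le (by norm_num : (6:ℕ) ≠ 0)).mp hVE6
end

section
/- Under the same five scaling relations, h = (k T_m/κ_m)^{4/3} U_e^{-5/3} and S = (k T_m/κ_m)^{4/3}(P^{1/2}/L)(ρ c_p (T_m - T_e))^{1/2} U_e^{-5/3}. -/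
theorem stmt16 (k δ h Tm S κm GE Ue VE P L ρ cp Te : ℝ)
    (hk : 0 < k) (hδ : 0 < δ) (hh : 0 < h) (hTm : 0 < Tm) (hS : 0 < S)
    (hκm : 0 < κm) (hGE : 0 < GE) (hUe : 0 < Ue) (hVE : 0 < VE) (hP : 0 < P)
    (hL : 0 < L) (hρ : 0 < ρ) (hcp : 0 < cp) (hTe : Te < Tm)
    (e1 : k * δ / h ^ 2 = Tm ^ 4 * S ^ 5 / (κm ^ 4 * δ ^ 4))
    (e2 : δ / h = GE) (e3 : GE = S * Ue / k)
    (e4 : VE = P * Tm ^ 4 * S ^ 3 * h ^ 3 / (L ^ 2 * κm ^ 4 * δ ^ 4))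
    (e5 : GE = VE * ρ * cp * (Tm - Te) / k) :
    h = (k * Tm / κm) ^ ((4:ℝ)/3) * Ue ^ (-(5:ℝ)/3) ∧
    S = (k * Tm / κm) ^ ((4:ℝ)/3) * (P ^ ((1:ℝ)/2) / L) *
      (ρ * cp * (Tm - Te)) ^ ((1:ℝ)/2) * Ue ^ (-(5:ℝ)/3) := by
  have hΔT : 0 < Tm - Te := by linarith
  have eδ : δ = GE * h := by
    field_simp at e2; linarith
  have ek : S * Ue = GE * k := by
    rw [e3]; field_simp
  have e1' : k * δ ^ 5 * κm ^ 4 = Tm ^ 4 * S ^ 5 * h ^ 2 := by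
    field_simp at e1
    nlinarith [e1]
  -- key relation for h
  have key : Ue ^ 5 * h ^ 3 * κm ^ 4 = k ^ 4 * Tm ^ 4 := by
    have hc : (S ^ 5 * h ^ 2 : ℝ) ≠ 0 := by positivity
    apply mul_left_cancel₀ hc
    calc S ^ 5 * h ^ 2 * (Ue ^ 5 * h ^ 3 * κm ^ 4)
        = (S * Ue) ^ 5 * h ^ 5 * κm ^ 4 := by ring
      _ = (GE * k) ^ 5 * h ^ 5 * κm ^ 4 := by rw [ek]
      _ = k ^ 4 * (k * (GE * h) ^ 5 * κm ^ 4) := by ring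
      _ = k ^ 4 * (k * δ ^ 5 * κm ^ 4) := by rw [eδ]
      _ = k ^ 4 * (Tm ^ 4 * S ^ 5 * h ^ 2) := by rw [e1']
      _ = S ^ 5 * h ^ 2 * (k ^ 4 * Tm ^ 4) := by ring
  set X : ℝ := k * Tm / κm with hXdef
  have hX : 0 < X := by positivity
  have hcube : h ^ 3 = X ^ 4 / Ue ^ 5 := by
    rw [hXdef]
    field_simp
    nlinarith [key]
  have hB : 0 < X ^ ((4:ℝ)/3) * Ue ^ (-(5:ℝ)/3) := by positivity
  have hr3 : (X ^ ((4:ℝ)/3) * Ue ^ (-(5:ℝ)/3)) ^ 3 = X ^ 4 / Ue ^ 5 := by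
    rw [mul_pow, ← Real.rpow_natCast (X ^ ((4:ℝ)/3)) 3,
      ← Real.rpow_natCast (Ue ^ (-(5:ℝ)/3)) 3,
      ← Real.rpow_mul hX.le, ← Real.rpow_mul hUe.le]
    norm_num
    field_simp
  have hhe : h = X ^ ((4:ℝ)/3) * Ue ^ (-(5:ℝ)/3) := by
    have h3 : h ^ 3 = (X ^ ((4:ℝ)/3) * Ue ^ (-(5:ℝ)/3)) ^ 3 := by rw [hcube, hr3]
    exact (pow_left_strictMonoOn₀ (three_ne_zero)).injOn hh.le hB.le h3
  refine ⟨hhe, ?_⟩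
  -- now the S part
  have e5' : GE * k = VE * ρ * cp * (Tm - Te) := by
    rw [e5]; field_simp
  have eVk : S * Ue = VE * (ρ * cp * (Tm - Te)) := by
    rw [ek]; linear_combination e5'
  have e4' : VE * (L ^ 2 * κm ^ 4 * δ ^ 4) = P * Tm ^ 4 * S ^ 3 * h ^ 3 := by
    rw [e4]; field_simp
  have ekδ : k * δ = S * Ue * h := by linear_combination k * eδ - h * ek
  have e4'' : VE * (L ^ 2 * κm ^ 4 * S * Ue ^ 4 * h) = k ^ 4 * P * Tm ^ 4 := by
    have hc : (S ^ 3 * h ^ 3 : ℝ) ≠ 0 := by positivity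
    apply mul_left_cancel₀ hc
    calc S ^ 3 * h ^ 3 * (VE * (L ^ 2 * κm ^ 4 * S * Ue ^ 4 * h))
        = VE * L ^ 2 * κm ^ 4 * (S * Ue * h) ^ 4 := by ring
      _ = VE * L ^ 2 * κm ^ 4 * (k * δ) ^ 4 := by rw [ekδ]
      _ = k ^ 4 * (VE * (L ^ 2 * κm ^ 4 * δ ^ 4)) := by ring
      _ = k ^ 4 * (P * Tm ^ 4 * S ^ 3 * h ^ 3) := by rw [e4']
      _ = S ^ 3 * h ^ 3 * (k ^ 4 * P * Tm ^ 4) := by ring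
  have key2 : S ^ 2 * (L ^ 2 * κm ^ 4 * Ue ^ 5 * h) = P * Tm ^ 4 * k ^ 4 * (ρ * cp * (Tm - Te)) := by
    calc S ^ 2 * (L ^ 2 * κm ^ 4 * Ue ^ 5 * h)
        = (S * Ue) * (L ^ 2 * κm ^ 4 * S * Ue ^ 4 * h) := by ring
      _ = VE * (ρ * cp * (Tm - Te)) * (L ^ 2 * κm ^ 4 * S * Ue ^ 4 * h) := by rw [eVk]
      _ = (ρ * cp * (Tm - Te)) * (VE * (L ^ 2 * κm ^ 4 * S * Ue ^ 4 * h)) := by ring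
      _ = (ρ * cp * (Tm - Te)) * (k ^ 4 * P * Tm ^ 4) := by rw [e4'']
      _ = P * Tm ^ 4 * k ^ 4 * (ρ * cp * (Tm - Te)) := by ring
  have hS2 : S ^ 2 * L ^ 2 = P * h ^ 2 * (ρ * cp * (Tm - Te)) := by
    have hc : (κm ^ 4 * Ue ^ 5 * h : ℝ) ≠ 0 := by positivity
    apply mul_right_cancel₀ hc
    calc S ^ 2 * L ^ 2 * (κm ^ 4 * Ue ^ 5 * h)
        = S ^ 2 * (L ^ 2 * κm ^ 4 * Ue ^ 5 * h) := by ring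
      _ = P * Tm ^ 4 * k ^ 4 * (ρ * cp * (Tm - Te)) := key2
      _ = P * (ρ * cp * (Tm - Te)) * (k ^ 4 * Tm ^ 4) := by ring
      _ = P * (ρ * cp * (Tm - Te)) * (Ue ^ 5 * h ^ 3 * κm ^ 4) := by rw [key]
      _ = P * h ^ 2 * (ρ * cp * (Tm - Te)) * (κm ^ 4 * Ue ^ 5 * h) := by ring
  have hsqP : (P ^ ((1:ℝ)/2)) ^ 2 = P := by
    rw [← Real.rpow_natCast (P ^ ((1:ℝ)/2)) 2, ← Real.rpow_mul hP.le]
    norm_num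
  have hsqR : ((ρ * cp * (Tm - Te)) ^ ((1:ℝ)/2)) ^ 2 = ρ * cp * (Tm - Te) := by
    have : (0:ℝ) ≤ ρ * cp * (Tm - Te) := by positivity
    rw [← Real.rpow_natCast _ 2, ← Real.rpow_mul this]
    norm_num
  have hBpos : 0 < X ^ ((4:ℝ)/3) * (P ^ ((1:ℝ)/2) / L) * (ρ * cp * (Tm - Te)) ^ ((1:ℝ)/2) * Ue ^ (-(5:ℝ)/3) := by
    have h1 : 0 < P ^ ((1:ℝ)/2) := Real.rpow_pos_of_pos hP _
    have h2 : 0 < (ρ * cp * (Tm - Te)) ^ ((1:ℝ)/2) := Real.rpow_pos_of_pos (by positivity) _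
    positivity
  have hsq : S ^ 2 = (X ^ ((4:ℝ)/3) * (P ^ ((1:ℝ)/2) / L) * (ρ * cp * (Tm - Te)) ^ ((1:ℝ)/2) * Ue ^ (-(5:ℝ)/3)) ^ 2 := by
    have hrw : (X ^ ((4:ℝ)/3) * (P ^ ((1:ℝ)/2) / L) * (ρ * cp * (Tm - Te)) ^ ((1:ℝ)/2) * Ue ^ (-(5:ℝ)/3)) ^ 2
        = h ^ 2 * ((P ^ ((1:ℝ)/2)) ^ 2) * (((ρ * cp * (Tm - Te)) ^ ((1:ℝ)/2)) ^ 2) / L ^ 2 := by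
      rw [hhe]; ring
    rw [hrw, hsqP, hsqR, eq_div_iff (by positivity : (L:ℝ) ^ 2 ≠ 0)]
    linear_combination hS2
  exact (pow_left_strictMonoOn₀ (two_ne_zero)).injOn hS.le hBpos.le hsq
end
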